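/- arXiv:2501.07068 — 3 statements merged into one kernel-verified Lean document; each statement's English description precedes it below -/
import Mathlib

section
/- For every complex number q with 0 < |q| < 1, Σ_{n=0}^∞ (−1)^n q^{2n} / (1+q^{2n+1}) = Σ_{n=0}^∞ (−1)^n q^n / (1+q^{2n+2}). -/
set_option maxRecDepth 4000


open scoped BigOperators

theorem stmt8 (q : ℂ) (h0 : 0 < ‖q‖) (h1 : ‖q‖ < 1) :
    (∑' n : ℕ, (-1) ^ n * q ^ (2 * n) / (1 + q ^ (2 * n + 1))) =
      ∑' n : ℕ, (-1) ^ n * q ^ n / (1 + q ^ (2 * n + 2)) := by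
  have hq1 : ‖q‖ < 1 := h1
  have hq0 : 0 ≤ ‖q‖ := norm_nonneg q
  have hqn : ∀ k : ℕ, 1 ≤ k → ‖q ^ k‖ < 1 := by
    intro k hk
    rw [norm_pow]
    calc ‖q‖ ^ k ≤ ‖q‖ ^ 1 := pow_le_pow_of_le_one hq0 hq1.le hk
      _ = ‖q‖ := pow_one _
      _ < 1 := hq1
  have geom : ∀ x : ℂ, ‖x‖ < 1 → (1 + x)⁻¹ = ∑' m : ℕ, (-x) ^ m := by
    intro x hx
    rw [tsum_geometric_of_norm_lt_one (by rwa [norm_neg] : ‖-x‖ < 1), sub_neg_eq_add]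
  set F : ℕ → ℕ → ℂ := fun n m => (-1 : ℂ) ^ (n + m) * q ^ (2 * n * (m + 1) + m) with hF
  have key : ∀ n m : ℕ, F n m = ((-1 : ℂ) ^ n * q ^ (2 * n)) * (-(q ^ (2 * n + 1))) ^ m := by
    intro n m
    simp only [hF]
    rw [neg_pow (q ^ (2 * n + 1)) m,
      show 2 * n * (m + 1) + m = 2 * n + (2 * n + 1) * m by ring, pow_add q, pow_add, pow_mul]
    ring
  have key' : ∀ n m : ℕ, F m n = ((-1 : ℂ) ^ n * q ^ n) * (-(q ^ (2 * n + 2))) ^ m := by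
    intro n m
    simp only [hF]
    rw [neg_pow (q ^ (2 * n + 2)) m,
      show 2 * m * (n + 1) + n = n + (2 * n + 2) * m by ring, pow_add q, pow_add, pow_mul]
    ring
  have hsummF : Summable (Function.uncurry F) := by
    apply Summable.of_norm_bounded (g := fun p : ℕ × ℕ => ‖q‖ ^ p.1 * ‖q‖ ^ p.2)
    · exact (summable_geometric_of_lt_one hq0 hq1).mul_of_nonneg
        (summable_geometric_of_lt_one hq0 hq1)
        (fun n => pow_nonneg hq0 n) (fun n => pow_nonneg hq0 n)
    · rintro ⟨n, m⟩
      have : ‖Function.uncurry F (n, m)‖ = ‖q‖ ^ (2 * n * (m + 1) + m) := by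
        simp [Function.uncurry, hF, norm_pow]
      rw [this, ← pow_add]
      exact pow_le_pow_of_le_one hq0 hq1.le (by nlinarith)
  have lhs_eq : ∀ n : ℕ, (-1 : ℂ) ^ n * q ^ (2 * n) / (1 + q ^ (2 * n + 1)) = ∑' m, F n m := by
    intro n
    rw [div_eq_mul_inv, geom _ (hqn (2 * n + 1) (by omega)), ← tsum_mul_left]
    exact tsum_congr fun m => (key n m).symm
  have rhs_eq : ∀ n : ℕ, (-1 : ℂ) ^ n * q ^ n / (1 + q ^ (2 * n + 2)) = ∑' m, F m n := by
    intro n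
    rw [div_eq_mul_inv, geom _ (hqn (2 * n + 2) (by omega)), ← tsum_mul_left]
    exact tsum_congr fun m => (key' n m).symm
  calc (∑' n : ℕ, (-1 : ℂ) ^ n * q ^ (2 * n) / (1 + q ^ (2 * n + 1)))
      = ∑' (n : ℕ) (m : ℕ), F n m := tsum_congr lhs_eq
    _ = ∑' (n : ℕ) (m : ℕ), F m n := (Summable.tsum_comm hsummF).symm
    _ = ∑' n : ℕ, (-1 : ℂ) ^ n * q ^ n / (1 + q ^ (2 * n + 2)) := (tsum_congr rhs_eq).symm
end

section
/- For every complex number q with 0 < |q| < 1, Σ_{n=1}^∞ q^{2n} / ((q^{2n};q^2)_{n+1} (q^{2n+1};q)_∞) = (q^2 / ((q;q)_∞ (1+q)(1+q^2))) · Σ_{n=0}^∞ (q^2;q^2)_n q^{2n} / ((−q^3;q^2)_n (−q^4;q^2)_n). -/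
open scoped BigOperators

open Filter

/-- Finite q-Pochhammer symbol `(a; q)_n`. -/
noncomputable def qPoch (a q : ℂ) (n : ℕ) : ℂ := ∏ j ∈ Finset.range n, (1 - a * q ^ j)

/-- Infinite q-Pochhammer symbol `(a; q)_∞`. -/
noncomputable def qPochInf (a q : ℂ) : ℂ := ∏' j : ℕ, (1 - a * q ^ j)

lemma qPoch_succ' (a q : ℂ) (n : ℕ) :
    qPoch a q (n + 1) = qPoch a q n * (1 - a * q ^ n) :=
  Finset.prod_range_succ _ _

lemma qPoch_add (a q : ℂ) (s t : ℕ) :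
    qPoch a q (s + t) = qPoch a q s * qPoch (a * q ^ s) q t := by
  unfold qPoch
  rw [Finset.prod_range_add]
  congr 1
  exact Finset.prod_congr rfl fun j _ => by rw [pow_add]; ring

lemma qPoch_succ (a q : ℂ) (n : ℕ) :
    qPoch a q (n + 1) = (1 - a) * qPoch (a * q) q n := by
  rw [show n + 1 = 1 + n by ring, qPoch_add]
  simp [qPoch]

lemma qPoch_mul_neg (a q : ℂ) (n : ℕ) :
    qPoch a q n * qPoch (-a) q n = qPoch (a ^ 2) (q ^ 2) n := by
  unfold qPoch
  rw [← Finset.prod_mul_distrib]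
  refine Finset.prod_congr rfl fun j _ => ?_
  have h : (q ^ 2) ^ j = q ^ j * q ^ j := by rw [← pow_mul, two_mul, pow_add]
  rw [h]; ring

lemma qPoch_even_odd (a q : ℂ) (n : ℕ) :
    qPoch a q (2 * n) = qPoch a (q ^ 2) n * qPoch (a * q) (q ^ 2) n := by
  induction n with
  | zero => simp [qPoch]
  | succ n ih =>
    have h2 : 2 * (n + 1) = (2 * n + 1) + 1 := by ring
    have hp : (q ^ 2) ^ n = q ^ (2 * n) := by rw [← pow_mul]
    rw [h2, qPoch_succ', qPoch_succ', ih, qPoch_succ' a (q ^ 2), qPoch_succ' (a * q) (q ^ 2), hp]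
    have hq1 : q ^ (2 * n + 1) = q ^ (2 * n) * q := by rw [pow_add]; ring
    rw [hq1]; ring

lemma summable_log_aux (a q : ℂ) (hq : ‖q‖ < 1) :
    Summable fun j : ℕ => Complex.log (1 - a * q ^ j) := by
  have hg : Summable fun n : ℕ => ‖a‖ * ‖q‖ ^ n :=
    (summable_geometric_of_lt_one (norm_nonneg q) hq).mul_left _
  have h0 : Tendsto (fun n : ℕ => ‖a‖ * ‖q‖ ^ n) atTop (nhds 0) :=
    hg.tendsto_atTop_zero
  obtain ⟨N, hN⟩ := (h0.eventually_le_const (by norm_num : (0:ℝ) < 1/2)).exists_forall_of_atTop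
  rw [← summable_nat_add_iff N]
  apply Summable.of_norm
  have hb : ∀ n : ℕ, ‖Complex.log (1 - a * q ^ (n + N))‖ ≤
      3 / 2 * (‖a‖ * ‖q‖ ^ (n + N)) := by
    intro n
    have h1 : ‖(-(a * q ^ (n + N)))‖ ≤ 1 / 2 := by
      rw [norm_neg, norm_mul, norm_pow]
      exact hN (n + N) (Nat.le_add_left N n)
    have := Complex.norm_log_one_add_half_le_self (z := -(a * q ^ (n + N))) (by simpa using h1)
    simp only [← sub_eq_add_neg] at this
    calc ‖Complex.log (1 - a * q ^ (n + N))‖ ≤ 3 / 2 * ‖-(a * q ^ (n + N))‖ := this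
      _ = 3 / 2 * (‖a‖ * ‖q‖ ^ (n + N)) := by
          rw [norm_neg]; simp [norm_mul, norm_pow]
  refine Summable.of_nonneg_of_le (fun n => norm_nonneg _) hb ?_
  exact (((summable_nat_add_iff N).2 hg).mul_left _)

lemma multipliable_aux (a q : ℂ) (hq : ‖q‖ < 1)
    (hne : ∀ j : ℕ, 1 - a * q ^ j ≠ 0) :
    Multipliable fun j : ℕ => 1 - a * q ^ j :=
  Complex.multipliable_of_summable_log (summable_log_aux a q hq)

lemma qPochInf_split (a q : ℂ) (N : ℕ) (hq : ‖q‖ < 1)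
    (hne : ∀ j : ℕ, 1 - a * q ^ j ≠ 0) :
    qPochInf a q = qPoch a q N * qPochInf (a * q ^ N) q := by
  have hm : Multipliable fun j : ℕ => 1 - a * q ^ (j + N) := by
    refine (multipliable_aux (a * q ^ N) q hq fun j => ?_).congr fun j => by
      rw [pow_add]; ring
    have := hne (N + j)
    rw [pow_add] at this; rwa [mul_assoc]
  have h := Multipliable.prod_mul_tprod_nat_mul' (f := fun j : ℕ => 1 - a * q ^ j) (k := N) hm
  have h2 : (∏' j : ℕ, (1 - a * q ^ (j + N))) = ∏' j : ℕ, (1 - (a * q ^ N) * q ^ j) :=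
    tprod_congr fun j => by rw [pow_add]; ring
  unfold qPochInf qPoch
  rw [← h, h2]

lemma one_sub_ne (x : ℂ) (hx : ‖x‖ < 1) : 1 - x ≠ 0 := by
  intro h
  rw [sub_eq_zero] at h
  rw [← h] at hx
  simp at hx

lemma one_sub_qpow_ne (q : ℂ) (h1 : ‖q‖ < 1) {k : ℕ} (hk : k ≠ 0) :
    1 - q ^ k ≠ 0 := by
  refine one_sub_ne _ ?_
  rw [norm_pow]
  exact pow_lt_one₀ (norm_nonneg q) h1 hk

theorem stmt12 (q : ℂ) (h0 : 0 < ‖q‖) (h1 : ‖q‖ < 1) :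
    (∑' n : ℕ, q ^ (2 * (n + 1)) /
        (qPoch (q ^ (2 * (n + 1))) (q ^ 2) (n + 2) * qPochInf (q ^ (2 * (n + 1) + 1)) q)) =
      (q ^ 2 / (qPochInf q q * (1 + q) * (1 + q ^ 2))) *
        ∑' n : ℕ, qPoch (q ^ 2) (q ^ 2) n * q ^ (2 * n) /
          (qPoch (-q ^ 3) (q ^ 2) n * qPoch (-q ^ 4) (q ^ 2) n) := by
  rw [← tsum_mul_left]
  refine tsum_congr fun n => ?_
  -- splitting the infinite product
  have hneq : ∀ j : ℕ, 1 - q * q ^ j ≠ 0 := fun j => by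
    rw [show q * q ^ j = q ^ (j + 1) by rw [pow_add]; ring]
    exact one_sub_qpow_ne q h1 (Nat.succ_ne_zero j)
  have hsplit := qPochInf_split q q (2 * (n + 1)) h1 hneq
  rw [show q * q ^ (2 * (n + 1)) = q ^ (2 * (n + 1) + 1) by rw [pow_add]; ring] at hsplit
  -- finite identities
  have hmulneg := qPoch_mul_neg q q (2 * (n + 1))
  have hadd : qPoch (q ^ 2) (q ^ 2) (2 * (n + 1)) =
      qPoch (q ^ 2) (q ^ 2) n * qPoch (q ^ (2 * (n + 1))) (q ^ 2) (n + 2) := by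
    have h := qPoch_add (q ^ 2) (q ^ 2) n (n + 2)
    rw [show n + (n + 2) = 2 * (n + 1) by ring] at h
    rw [show q ^ 2 * (q ^ 2) ^ n = q ^ (2 * (n + 1)) by
      rw [← pow_mul, ← pow_add, show 2 + 2 * n = 2 * (n + 1) by ring]] at h
    exact h
  have hodd : qPoch (-q) q (2 * (n + 1)) =
      (1 + q) * qPoch (-q ^ 3) (q ^ 2) n * ((1 + q ^ 2) * qPoch (-q ^ 4) (q ^ 2) n) := by
    rw [qPoch_even_odd]
    congr 1
    · rw [qPoch_succ, show (1 : ℂ) - -q = 1 + q by ring,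
        show -q * q ^ 2 = -q ^ 3 by ring]
    · rw [qPoch_succ, show (1 : ℂ) - -q * q = 1 + q ^ 2 by ring,
        show -q * q * q ^ 2 = -q ^ 4 by ring]
  -- nonvanishing of (q^2; q^2)_n
  have hE : qPoch (q ^ 2) (q ^ 2) n ≠ 0 := by
    unfold qPoch
    refine Finset.prod_ne_zero_iff.mpr fun j _ => ?_
    rw [show q ^ 2 * (q ^ 2) ^ j = q ^ (2 + 2 * j) by rw [← pow_mul, ← pow_add]]
    exact one_sub_qpow_ne q h1 (by omega)
  -- final algebra
  rw [hsplit, div_mul_div_comm]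
  have hden : qPoch q q (2 * (n + 1)) * qPochInf (q ^ (2 * (n + 1) + 1)) q * (1 + q) *
        (1 + q ^ 2) * (qPoch (-q ^ 3) (q ^ 2) n * qPoch (-q ^ 4) (q ^ 2) n) =
      qPoch (q ^ 2) (q ^ 2) n *
        (qPoch (q ^ (2 * (n + 1))) (q ^ 2) (n + 2) * qPochInf (q ^ (2 * (n + 1) + 1)) q) := by
    have hkey : qPoch q q (2 * (n + 1)) *
        ((1 + q) * qPoch (-q ^ 3) (q ^ 2) n * ((1 + q ^ 2) * qPoch (-q ^ 4) (q ^ 2) n)) =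
        qPoch (q ^ 2) (q ^ 2) n * qPoch (q ^ (2 * (n + 1))) (q ^ 2) (n + 2) := by
      rw [← hodd, hmulneg, hadd]
    linear_combination qPochInf (q ^ (2 * (n + 1) + 1)) q * hkey
  have hnum : q ^ 2 * (qPoch (q ^ 2) (q ^ 2) n * q ^ (2 * n)) =
      qPoch (q ^ 2) (q ^ 2) n * q ^ (2 * (n + 1)) := by
    rw [show 2 * (n + 1) = 2 * n + 2 by ring, pow_add]; ring
  rw [hnum, hden, mul_div_mul_left _ _ hE]
end

section
/- For every complex number q with 0 < |q| < 1, Σ_{m=0}^∞ (−1)^m q^{m^2} / (−q^2;q^2)_{m+1} = −q + (1+q)·φ_3(−q). -/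
open scoped BigOperators

/-- The third order mock theta function `φ₃`. -/
noncomputable def phi3 (q : ℂ) : ℂ := ∑' n : ℕ, q ^ (n ^ 2) / qPoch (-q ^ 2) (q ^ 2) n

theorem stmt19 (q : ℂ) (h0 : 0 < ‖q‖) (h1 : ‖q‖ < 1) :
    (∑' m : ℕ, (-1) ^ m * q ^ (m ^ 2) / qPoch (-q ^ 2) (q ^ 2) (m + 1)) =
      -q + (1 + q) * phi3 (-q) := by
  set r := ‖q‖ with hrdef
  have hr0 : 0 ≤ r := norm_nonneg q
  have hr2 : r ^ 2 < 1 := pow_lt_one₀ hr0 h1 two_ne_zero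
  have h12 : (0:ℝ) < 1 - r ^ 2 := by linarith
  have hval : ∀ j : ℕ, ‖(-q ^ 2) * (q ^ 2) ^ j‖ = r ^ 2 * (r ^ 2) ^ j := by
    intro j
    rw [hrdef]
    simp [map_mul, map_pow]
  have hle : ∀ j : ℕ, ‖(-q ^ 2) * (q ^ 2) ^ j‖ ≤ r ^ 2 := by
    intro j
    rw [hval j]
    calc r ^ 2 * (r ^ 2) ^ j ≤ r ^ 2 * 1 :=
          mul_le_mul_of_nonneg_left (pow_le_one₀ (by positivity) hr2.le) (by positivity)
      _ = r ^ 2 := mul_one _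
  have hfac : ∀ j : ℕ, (1 : ℂ) - (-q ^ 2) * (q ^ 2) ^ j ≠ 0 := by
    intro j h
    have h' : (-q ^ 2) * (q ^ 2) ^ j = 1 := by linear_combination -h
    have := hle j
    rw [h', norm_one] at this
    linarith
  have hPne : ∀ n, qPoch (-q ^ 2) (q ^ 2) n ≠ 0 := by
    intro n
    rw [qPoch]
    exact Finset.prod_ne_zero_iff.mpr fun j _ => hfac j
  have hPnorm : ∀ n, (1 - r ^ 2) ^ n ≤ ‖qPoch (-q ^ 2) (q ^ 2) n‖ := by
    intro n
    rw [qPoch, norm_prod]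
    calc (1 - r ^ 2) ^ n = ∏ _j ∈ Finset.range n, (1 - r ^ 2) := by
          rw [Finset.prod_const, Finset.card_range]
      _ ≤ ∏ j ∈ Finset.range n, ‖1 - (-q ^ 2) * (q ^ 2) ^ j‖ := by
          apply Finset.prod_le_prod (fun j _ => by linarith)
          intro j _
          have h2 := norm_add_le (1 - (-q ^ 2) * (q ^ 2) ^ j) ((-q ^ 2) * (q ^ 2) ^ j)
          simp only [sub_add_cancel, norm_one] at h2
          linarith [hle j]
  set a : ℕ → ℂ := fun m => (-1) ^ m * q ^ (m ^ 2) / qPoch (-q ^ 2) (q ^ 2) m with ha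
  have hanorm : ∀ m, ‖a m‖ = r ^ (m ^ 2) / ‖qPoch (-q ^ 2) (q ^ 2) m‖ := by
    intro m
    rw [hrdef]
    simp [ha, norm_div, norm_mul, norm_pow]
  have hsum : Summable a := by
    obtain ⟨M, hM⟩ := exists_pow_lt_of_lt_one (x := (1 - r ^ 2) / 2) (by linarith) h1
    apply Summable.of_norm_bounded_eventually_nat (g := fun m => (1/2 : ℝ) ^ m)
      (summable_geometric_of_lt_one (by norm_num) (by norm_num))
    filter_upwards [Filter.eventually_ge_atTop M] with m hm
    have hPm := hPnorm m
    have hPpos : (0:ℝ) < (1 - r ^ 2) ^ m := pow_pos h12 m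
    have h1' : r ^ m ≤ (1 - r ^ 2) / 2 :=
      le_trans (pow_le_pow_of_le_one hr0 h1.le hm) hM.le
    rw [hanorm]
    calc r ^ (m ^ 2) / ‖qPoch (-q ^ 2) (q ^ 2) m‖
        ≤ r ^ (m ^ 2) / (1 - r ^ 2) ^ m :=
          div_le_div_of_nonneg_left (by positivity) hPpos hPm
      _ = (r ^ m / (1 - r ^ 2)) ^ m := by
          rw [div_pow, ← pow_mul, sq]
      _ ≤ (1/2 : ℝ) ^ m := by
          apply pow_le_pow_left₀ (div_nonneg (by positivity) h12.le)
          rw [div_le_div_iff₀ h12 (by norm_num)]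
          linarith
  have hsum2 : Summable fun m => a (m + 1) := (summable_nat_add_iff 1).mpr hsum
  have key : ∀ m : ℕ, (-1) ^ m * q ^ (m ^ 2) / qPoch (-q ^ 2) (q ^ 2) (m + 1)
      = a m + q * a (m + 1) := by
    intro m
    have h1' := hPne m
    have h2' := hfac m
    have hc : qPoch (-q ^ 2) (q ^ 2) (m + 1)
        = qPoch (-q ^ 2) (q ^ 2) m * (1 - (-q ^ 2) * (q ^ 2) ^ m) := by
      rw [qPoch, qPoch, Finset.prod_range_succ]
    have he : (m + 1) ^ 2 = m ^ 2 + 2 * m + 1 := by ring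
    simp only [ha]
    rw [hc, he, ← mul_div_assoc,
      div_add_div _ _ h1' (mul_ne_zero h1' h2'),
      div_eq_div_iff (mul_ne_zero h1' h2') (mul_ne_zero h1' (mul_ne_zero h1' h2'))]
    ring
  have hphi : phi3 (-q) = ∑' m, a m := by
    rw [phi3]
    apply tsum_congr
    intro n
    have h2 : (-q) ^ 2 = q ^ 2 := by ring
    have h3 : (-q) ^ (n ^ 2) = (-1) ^ n * q ^ (n ^ 2) := by
      rw [neg_pow]
      rcases Nat.even_or_odd n with he | ho
      · rw [(Nat.even_pow.mpr ⟨he, two_ne_zero⟩).neg_one_pow, he.neg_one_pow]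
      · rw [(ho.pow).neg_one_pow, ho.neg_one_pow]
    rw [h2, h3]
  have ha0 : a 0 = 1 := by simp [ha, qPoch]
  have hzero := Summable.tsum_eq_zero_add hsum
  calc (∑' m : ℕ, (-1) ^ m * q ^ (m ^ 2) / qPoch (-q ^ 2) (q ^ 2) (m + 1))
      = ∑' m, (a m + q * a (m + 1)) := tsum_congr key
    _ = (∑' m, a m) + q * ∑' m, a (m + 1) := by
        rw [Summable.tsum_add hsum (hsum2.mul_left q), tsum_mul_left]
    _ = -q + (1 + q) * phi3 (-q) := by
        rw [hphi]
        rw [ha0] at hzero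
        linear_combination (-q) * hzero
end
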